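/- arXiv:1107.2105 — 2 statements merged into one kernel-verified Lean document; each statement's English description precedes it below -/
import Mathlib

section
/- (Key invariant behind Theorem 1, the optimality of algorithm BAL, first iteration.) Consider an energy-minimization instance, and regard its jobs and event intervals as a WAP instance with m_j = m processors in every interval. Let v* be the minimum speed v>0 such that the WAP instance <J,I,v> is feasible, and let J_c be the (nonempty) set of jobs critical for <J,I,v*>. Then there exists an optimal feasible solution of the energy-minimization problem in which s_i = v* for every job i ∈ J_c and s_i ≤ v* for every job i ∉ J_c. -/
open Finset

/-- A feasible solution of the energy-minimization convex program:
speeds `s i > 0`, times `t i j ≥ 0`, `t i j = 0` for jobs not alive in interval `j`,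
each job gets enough processing time `w i / s i`, the machine capacity
`min m (a j) * |I j|` is respected in each interval, and `t i j ≤ |I j|`. -/
def EFeasible {n L : ℕ} (m : ℕ) (w : Fin n → ℝ) (len : Fin L → ℝ)
    (Alive : Fin n → Fin L → Bool)
    (s : Fin n → ℝ) (t : Fin n → Fin L → ℝ) : Prop :=
  (∀ i, 0 < s i) ∧
  (∀ i j, 0 ≤ t i j) ∧
  (∀ i j, ¬ Alive i j → t i j = 0) ∧
  (∀ i, w i / s i ≤ ∑ j ∈ univ.filter (fun j => Alive i j), t i j) ∧
  (∀ j, ∑ i ∈ univ.filter (fun i => Alive i j), t i j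
      ≤ ((min m (univ.filter (fun i => Alive i j)).card : ℕ) : ℝ) * len j) ∧
  (∀ i j, t i j ≤ len j)

/-- The energy `∑ i, w i * s i ^ (α - 1)` of a solution. -/
noncomputable def Energy {n : ℕ} (α : ℝ) (w s : Fin n → ℝ) : ℝ :=
  ∑ i, w i * s i ^ (α - 1)

/-- (P2): if `i` is alive in `j` with `t i j = 0`, then `s i ≤ s k` for every
`k` alive in `j` with `t k j > 0`. -/
def P2 {n L : ℕ} (Alive : Fin n → Fin L → Bool) (s : Fin n → ℝ)
    (t : Fin n → Fin L → ℝ) : Prop :=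
  ∀ i j, Alive i j → t i j = 0 → ∀ k, Alive k j → 0 < t k j → s i ≤ s k

/-- (P3): if `t i j = |I j|`, then `s i ≥ s k` for every `k` alive in `j`
with `t k j < |I j|`. -/
def P3 {n L : ℕ} (len : Fin L → ℝ) (Alive : Fin n → Fin L → Bool) (s : Fin n → ℝ)
    (t : Fin n → Fin L → ℝ) : Prop :=
  ∀ i j, Alive i j → t i j = len j → ∀ k, Alive k j → t k j < len j → s k ≤ s i

/-- (P4): any two jobs alive in `j` with `0 < t · j < |I j|` have equal speeds. -/
def P4 {n L : ℕ} (len : Fin L → ℝ) (Alive : Fin n → Fin L → Bool) (s : Fin n → ℝ)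
    (t : Fin n → Fin L → ℝ) : Prop :=
  ∀ i k j, Alive i j → Alive k j → 0 < t i j → t i j < len j →
    0 < t k j → t k j < len j → s i = s k

/-- (P5): if `a j ≤ m`, then `t i j = |I j|` for every job `i` alive in `j`. -/
def P5 {n L : ℕ} (m : ℕ) (len : Fin L → ℝ) (Alive : Fin n → Fin L → Bool)
    (t : Fin n → Fin L → ℝ) : Prop :=
  ∀ j, (univ.filter (fun i => Alive i j)).card ≤ m → ∀ i, Alive i j → t i j = len j

open Finset

/-- A feasible assignment for the WAP instance `⟨J, I, v⟩`: times `t i j ≥ 0`,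
`t i j = 0` if job `i` is not alive in interval `j`, `t i j ≤ |I j|`,
the capacity `m j * |I j|` of each interval is respected, and each job `i`
receives exactly `w i / v` units of processing time. -/
def WFeasAssign {n L : ℕ} (w : Fin n → ℝ) (len : Fin L → ℝ) (mj : Fin L → ℕ)
    (Alive : Fin n → Fin L → Bool) (v : ℝ) (t : Fin n → Fin L → ℝ) : Prop :=
  (∀ i j, 0 ≤ t i j) ∧
  (∀ i j, ¬ Alive i j → t i j = 0) ∧
  (∀ i j, t i j ≤ len j) ∧
  (∀ j, ∑ i ∈ univ.filter (fun i => Alive i j), t i j ≤ (mj j : ℝ) * len j) ∧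
  (∀ i, ∑ j ∈ univ.filter (fun j => Alive i j), t i j = w i / v)

/-- The WAP instance `⟨J, I, v⟩` is feasible if a feasible assignment exists. -/
def WFeasible {n L : ℕ} (w : Fin n → ℝ) (len : Fin L → ℝ) (mj : Fin L → ℕ)
    (Alive : Fin n → Fin L → Bool) (v : ℝ) : Prop :=
  ∃ t, WFeasAssign w len mj Alive v t

/-- Job `i` is critical for `⟨J, I, v⟩`: in every feasible assignment and every
interval `j` in which `i` is alive, either `t i j = |I j|` or the whole capacity
`m j * |I j|` of the interval is used. -/
def CriticalJob {n L : ℕ} (w : Fin n → ℝ) (len : Fin L → ℝ) (mj : Fin L → ℕ)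
    (Alive : Fin n → Fin L → Bool) (v : ℝ) (i : Fin n) : Prop :=
  ∀ t, WFeasAssign w len mj Alive v t → ∀ j, Alive i j →
    t i j = len j ∨ ∑ k ∈ univ.filter (fun k => Alive k j), t k j = (mj j : ℝ) * len j

/-- The instance `⟨J, I, v⟩` is critical: it is feasible, but `⟨J, I, v'⟩` is
infeasible for every speed `0 < v' < v`. -/
def CriticalInstance {n L : ℕ} (w : Fin n → ℝ) (len : Fin L → ℝ) (mj : Fin L → ℕ)
    (Alive : Fin n → Fin L → Bool) (v : ℝ) : Prop :=
  WFeasible w len mj Alive v ∧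
    ∀ v', 0 < v' → v' < v → ¬ WFeasible w len mj Alive v'

lemma tangent_rpow {β x y : ℝ} (hβ : 0 < β) (hx : 0 < x) (hy : 0 < y) :
    y ^ (-β) - β * y ^ (-β - 1) * (x - y) ≤ x ^ (-β) := by
  have h1β : (0:ℝ) < 1 + β := by linarith
  set w₁ : ℝ := 1 / (1 + β) with hw₁
  set w₂ : ℝ := β / (1 + β) with hw₂
  have hw₁0 : 0 ≤ w₁ := by positivity
  have hw₂0 : 0 ≤ w₂ := by positivity
  have hp₁0 : (0:ℝ) ≤ x ^ (-β) := (Real.rpow_pos_of_pos hx _).le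
  have hp₂0 : (0:ℝ) ≤ x * y ^ (-β - 1) := by positivity
  have hsum : w₁ + w₂ = 1 := by rw [hw₁, hw₂]; field_simp
  have key := Real.geom_mean_le_arith_mean2_weighted hw₁0 hw₂0 hp₁0 hp₂0 hsum
  have hgm : (x ^ (-β)) ^ w₁ * (x * y ^ (-β - 1)) ^ w₂ = y ^ (-β) := by
    rw [Real.mul_rpow hx.le (Real.rpow_pos_of_pos hy _).le,
      ← Real.rpow_mul hx.le, ← Real.rpow_mul hy.le, ← mul_assoc, ← Real.rpow_add hx]
    have e1 : -β * w₁ + w₂ = 0 := by rw [hw₁, hw₂]; field_simp; ring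
    have e2 : (-β - 1) * w₂ = -β := by rw [hw₂]; field_simp; ring
    rw [e1, e2, Real.rpow_zero, one_mul]
  rw [hgm] at key
  have hyy : y ^ (-β - 1) * y = y ^ (-β) := by
    rw [← Real.rpow_add_one hy.ne']; ring_nf
  have h2 := mul_le_mul_of_nonneg_left key h1β.le
  have e3 : (1+β) * (w₁ * x ^ (-β) + w₂ * (x * y ^ (-β-1)))
      = x ^ (-β) + β * (x * y ^ (-β - 1)) := by
    rw [hw₁, hw₂]; field_simp
  rw [e3] at h2
  nlinarith [h2, hyy]

inductive Reach {n L : ℕ} (τ t : Fin n → Fin L → ℝ) (i0 : Fin n) : Fin n → Prop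
  | base : Reach τ t i0 i0
  | step {i k : Fin n} {j : Fin L} : Reach τ t i0 i → t i j < τ i j → τ k j < t k j →
      Reach τ t i0 k

lemma augment {n L : ℕ} {len : Fin L → ℝ} {Alive : Fin n → Fin L → Bool}
    {τ t : Fin n → Fin L → ℝ} {i0 : Fin n}
    (ht0 : ∀ i j, 0 ≤ t i j) (htz : ∀ i j, ¬ Alive i j → t i j = 0)
    (htlen : ∀ i j, t i j ≤ len j)
    (hτ0 : ∀ i j, 0 ≤ τ i j) (hτz : ∀ i j, ¬ Alive i j → τ i j = 0)
    (hτlen : ∀ i j, τ i j ≤ len j)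
    {k : Fin n} (hk : Reach τ t i0 k) :
    ∃ δ C : ℝ, 0 < δ ∧ 0 ≤ C ∧ ∀ η : ℝ, 0 < η → η ≤ δ →
      ∃ t' : Fin n → Fin L → ℝ,
        (∀ a b, 0 ≤ t' a b) ∧ (∀ a b, ¬ Alive a b → t' a b = 0) ∧
        (∀ a b, t' a b ≤ len b) ∧
        (∀ b, ∑ a ∈ univ.filter (fun a => Alive a b), t' a b
            = ∑ a ∈ univ.filter (fun a => Alive a b), t a b) ∧
        (∀ a, (∑ b ∈ univ.filter (fun b => Alive a b), t' a b)
            = (∑ b ∈ univ.filter (fun b => Alive a b), t a b)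
              + (if a = i0 then η else 0) - (if a = k then η else 0)) ∧
        (∀ a b, |t' a b - t a b| ≤ C * η) := by
  induction hk with
  | base =>
      refine ⟨1, 0, one_pos, le_refl _, fun η hη hη1 => ⟨t, ht0, htz, htlen,
        fun b => rfl, fun a => ?_, fun a b => by simp⟩⟩
      by_cases h : a = i0 <;> simp [h]
  | @step i k j hi hij hkj IH =>
      obtain ⟨δ, C, hδ, hC, H⟩ := IH
      have hAij : Alive i j := by
        by_contra hA; have := hτz i j hA; have := ht0 i j; linarith
      have hAkj : Alive k j := by
        by_contra hA; have := htz k j hA; have := hτ0 k j; linarith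
      have hCp : (0:ℝ) < C + 1 := by linarith
      refine ⟨min δ (min ((τ i j - t i j) / (C + 1)) ((t k j - τ k j) / (C + 1))), C + 1,
        lt_min hδ (lt_min (div_pos (by linarith) hCp) (div_pos (by linarith) hCp)),
        by linarith, ?_⟩
      intro η hη hη1
      obtain ⟨t'', h0, hz, hlen', hsums, hTT, hdev⟩ :=
        H η hη (le_trans hη1 (min_le_left _ _))
      have hup : η * (C + 1) ≤ τ i j - t i j := by
        have := le_trans hη1 (le_trans (min_le_right _ _) (min_le_left _ _))
        rw [le_div_iff₀ hCp] at this; linarith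
      have hdn : η * (C + 1) ≤ t k j - τ k j := by
        have := le_trans hη1 (le_trans (min_le_right _ _) (min_le_right _ _))
        rw [le_div_iff₀ hCp] at this; linarith
      classical
      refine ⟨fun a b => t'' a b +
          (if b = j then ((if a = i then η else 0) - (if a = k then η else 0)) else 0),
        ?_, ?_, ?_, ?_, ?_, ?_⟩
      · -- nonneg
        intro a b
        dsimp only
        by_cases hb : b = j
        · subst hb
          rw [if_pos rfl]
          by_cases hai : a = i <;> by_cases hak : a = k
          · rw [if_pos hai, if_pos hak]; have := h0 a b; linarith
          · rw [if_pos hai, if_neg hak]; have := h0 a b; linarith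
          · rw [if_neg hai, if_pos hak, hak]
            have h1 := (abs_le.1 (hdev k b)).1
            have h2 := hτ0 k b
            nlinarith
          · rw [if_neg hai, if_neg hak]; have := h0 a b; linarith
        · rw [if_neg hb]; have := h0 a b; linarith
      · -- zero off alive
        intro a b hA
        dsimp only
        have hzz := hz a b hA
        by_cases hb : b = j
        · subst hb
          have hai : ¬ a = i := fun h => hA (h ▸ hAij)
          have hak : ¬ a = k := fun h => hA (h ▸ hAkj)
          rw [if_pos rfl, if_neg hai, if_neg hak, hzz]; ring
        · rw [if_neg hb, hzz]; ring
      · -- le len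
        intro a b
        dsimp only
        by_cases hb : b = j
        · subst hb
          rw [if_pos rfl]
          by_cases hai : a = i <;> by_cases hak : a = k
          · rw [if_pos hai, if_pos hak]; have := hlen' a b; linarith
          · rw [if_pos hai, if_neg hak, hai]
            have h1 := (abs_le.1 (hdev i b)).2
            have h2 := hτlen i b
            nlinarith
          · rw [if_neg hai, if_pos hak]; have := hlen' a b; linarith
          · rw [if_neg hai, if_neg hak]; have := hlen' a b; linarith
        · rw [if_neg hb]; have := hlen' a b; linarith
      · -- interval sums preserved
        intro b
        dsimp only
        rw [Finset.sum_add_distrib]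
        by_cases hb : b = j
        · subst hb
          have e1 : (∑ a ∈ univ.filter (fun a => Alive a b),
              (if b = b then ((if a = i then η else 0) - (if a = k then η else 0)) else 0))
              = ∑ a ∈ univ.filter (fun a => Alive a b),
                ((if a = i then η else 0) - (if a = k then η else 0)) :=
            Finset.sum_congr rfl (fun a _ => by rw [if_pos rfl])
          rw [e1, Finset.sum_sub_distrib, Finset.sum_ite_eq' _ i (fun _ => η),
            Finset.sum_ite_eq' _ k (fun _ => η)]
          simp only [mem_filter, mem_univ, true_and, hAij, hAkj, if_pos]
          rw [hsums b]; ring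
        · have e1 : (∑ a ∈ univ.filter (fun a => Alive a b),
              (if b = j then ((if a = i then η else 0) - (if a = k then η else 0)) else 0))
              = 0 := Finset.sum_eq_zero (fun a _ => by rw [if_neg hb])
          rw [e1, hsums b]; ring
      · -- per-job totals
        intro a
        dsimp only
        rw [Finset.sum_add_distrib,
          Finset.sum_ite_eq' _ j (fun _ => ((if a = i then η else 0) - (if a = k then η else 0))),
          hTT a]
        by_cases hAaj : Alive a j
        · simp only [mem_filter, mem_univ, true_and, hAaj, if_pos]; ring
        · have hai : ¬ a = i := fun h => hAaj (h ▸ hAij)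
          have hak : ¬ a = k := fun h => hAaj (h ▸ hAkj)
          simp only [mem_filter, mem_univ, true_and, hAaj, if_neg, if_neg hai, if_neg hak]
          simp
      · -- deviation
        intro a b
        dsimp only
        have hd := abs_le.1 (hdev a b)
        rw [abs_le]
        by_cases hb : b = j
        · subst hb
          rw [if_pos rfl]
          by_cases hai : a = i <;> by_cases hak : a = k
          · rw [if_pos hai, if_pos hak]; constructor <;> nlinarith
          · rw [if_pos hai, if_neg hak]; constructor <;> nlinarith
          · rw [if_neg hai, if_pos hak]; constructor <;> nlinarith
          · rw [if_neg hai, if_neg hak]; constructor <;> nlinarith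
        · rw [if_neg hb]; constructor <;> nlinarith

def TTf {n L : ℕ} (Alive : Fin n → Fin L → Bool) (t : Fin n → Fin L → ℝ) (i : Fin n) : ℝ :=
  ∑ j ∈ univ.filter (fun j => Alive i j), t i j

def InK {n L : ℕ} (m : ℕ) (len : Fin L → ℝ) (Alive : Fin n → Fin L → Bool)
    (t : Fin n → Fin L → ℝ) : Prop :=
  (∀ i j, 0 ≤ t i j) ∧ (∀ i j, ¬ Alive i j → t i j = 0) ∧ (∀ i j, t i j ≤ len j) ∧
  (∀ j, ∑ i ∈ univ.filter (fun i => Alive i j), t i j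
      ≤ ((min m (univ.filter (fun i => Alive i j)).card : ℕ) : ℝ) * len j)

def Kset {n L : ℕ} (m : ℕ) (len : Fin L → ℝ) (Alive : Fin n → Fin L → Bool) (ε : ℝ) :
    Set (Fin n → Fin L → ℝ) := {t | InK m len Alive t ∧ ∀ i, ε ≤ TTf Alive t i}

noncomputable def Gfun {n L : ℕ} (α : ℝ) (w : Fin n → ℝ) (Alive : Fin n → Fin L → Bool)
    (t : Fin n → Fin L → ℝ) : ℝ := ∑ i, w i * (w i / TTf Alive t i) ^ (α - 1)

lemma exists_min {n L : ℕ} {m : ℕ} {α : ℝ} {w : Fin n → ℝ} {len : Fin L → ℝ}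
    {Alive : Fin n → Fin L → Bool} {ε : ℝ} (hε : 0 < ε) (hw : ∀ i, 0 < w i)
    (hne : (Kset m len Alive ε).Nonempty) :
    ∃ t0 ∈ Kset m len Alive ε, ∀ t1 ∈ Kset m len Alive ε,
      Gfun α w Alive t0 ≤ Gfun α w Alive t1 := by
  have c_eval : ∀ (i : Fin n) (j : Fin L), Continuous fun t : Fin n → Fin L → ℝ => t i j :=
    fun i j => (continuous_apply j).comp (continuous_apply i)
  have c_TT : ∀ i, Continuous fun t : Fin n → Fin L → ℝ => TTf Alive t i := by
    intro i
    exact continuous_finset_sum _ (fun j _ => c_eval i j)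
  have hclosed : IsClosed (Kset m len Alive ε) := by
    have h1 : Kset m len Alive ε =
        (⋂ i, ⋂ j, {t : Fin n → Fin L → ℝ | 0 ≤ t i j}) ∩
        ((⋂ i, ⋂ j, {t : Fin n → Fin L → ℝ | ¬ Alive i j → t i j = 0}) ∩
        ((⋂ i, ⋂ j, {t : Fin n → Fin L → ℝ | t i j ≤ len j}) ∩
        ((⋂ j, {t : Fin n → Fin L → ℝ | ∑ i ∈ univ.filter (fun i => Alive i j), t i j
            ≤ ((min m (univ.filter (fun i => Alive i j)).card : ℕ) : ℝ) * len j}) ∩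
        (⋂ i, {t : Fin n → Fin L → ℝ | ε ≤ TTf Alive t i})))) := by
      ext t
      simp only [Kset, InK, Set.mem_inter_iff, Set.mem_iInter, Set.mem_setOf_eq]
      tauto
    rw [h1]
    refine IsClosed.inter ?_ (IsClosed.inter ?_ (IsClosed.inter ?_ (IsClosed.inter ?_ ?_)))
    · exact isClosed_iInter fun i => isClosed_iInter fun j =>
        isClosed_le continuous_const (c_eval i j)
    · refine isClosed_iInter fun i => isClosed_iInter fun j => ?_
      by_cases hA : Alive i j
      · have : {t : Fin n → Fin L → ℝ | ¬ Alive i j → t i j = 0} = Set.univ := by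
          ext t; simp [hA]
        rw [this]; exact isClosed_univ
      · have : {t : Fin n → Fin L → ℝ | ¬ Alive i j → t i j = 0}
            = {t : Fin n → Fin L → ℝ | t i j = 0} := by
          ext t; simp [hA]
        rw [this]; exact isClosed_eq (c_eval i j) continuous_const
    · exact isClosed_iInter fun i => isClosed_iInter fun j =>
        isClosed_le (c_eval i j) continuous_const
    · exact isClosed_iInter fun j =>
        isClosed_le (continuous_finset_sum _ fun i _ => c_eval i j) continuous_const
    · exact isClosed_iInter fun i => isClosed_le continuous_const (c_TT i)
  have hB : IsCompact (Set.pi Set.univ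
      (fun _ : Fin n => Set.pi Set.univ fun j : Fin L => Set.Icc (0:ℝ) (len j))) :=
    isCompact_univ_pi fun _ => isCompact_univ_pi fun j => isCompact_Icc
  have hsub : Kset m len Alive ε ⊆ Set.pi Set.univ
      (fun _ : Fin n => Set.pi Set.univ fun j : Fin L => Set.Icc (0:ℝ) (len j)) := by
    intro t ht
    rw [Set.mem_pi]
    intro i _
    rw [Set.mem_pi]
    intro j _
    exact ⟨ht.1.1 i j, ht.1.2.2.1 i j⟩
  have hKc : IsCompact (Kset m len Alive ε) := hB.of_isClosed_subset hclosed hsub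
  have hcont : ContinuousOn (Gfun α w Alive) (Kset m len Alive ε) := by
    apply continuousOn_finset_sum
    intro i _
    have hne0 : ∀ t ∈ Kset m len Alive ε, TTf Alive t i ≠ 0 :=
      fun t ht => ne_of_gt (lt_of_lt_of_le hε (ht.2 i))
    exact continuousOn_const.mul
      ((ContinuousOn.div continuousOn_const (c_TT i).continuousOn hne0).rpow_const
        (fun t ht => Or.inl (div_ne_zero (hw i).ne' (hne0 t ht))))
  obtain ⟨t0, ht0, hmin⟩ := hKc.exists_isMinOn hne hcont
  exact ⟨t0, ht0, fun t1 h1 => hmin h1⟩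

lemma term_rw {β W x : ℝ} (hW : 0 < W) (hx : 0 < x) :
    W * (W / x) ^ β = W * W ^ β * x ^ (-β) := by
  rw [Real.div_rpow hW.le hx.le, Real.rpow_neg hx.le]; ring

lemma term_rw2 {β W x : ℝ} (hW : 0 < W) (hx : 0 < x) :
    (W / x) ^ (β + 1) = W * W ^ β * x ^ (-β - 1) := by
  rw [Real.div_rpow hW.le hx.le]
  have h1 : W ^ (β+1) = W ^ β * W := Real.rpow_add_one hW.ne' β
  have h2 : x ^ (-β-1) = (x ^ (β+1))⁻¹ := by
    have e : -β - 1 = -(β+1) := by ring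
    rw [e]
    exact Real.rpow_neg hx.le (β+1)
  rw [h1, h2, div_eq_mul_inv]; ring

lemma sum_filter_eq_sum_univ {N : ℕ} {p : Fin N → Prop} [DecidablePred p] {f : Fin N → ℝ}
    (h : ∀ i, ¬ p i → f i = 0) : ∑ i ∈ univ.filter p, f i = ∑ i, f i :=
  Finset.sum_filter_of_ne (fun i _ hf => by by_contra hp; exact hf (h i hp))


lemma goalA {n L : ℕ} {m : ℕ} {α : ℝ} {w : Fin n → ℝ} {len : Fin L → ℝ}
    {Alive : Fin n → Fin L → Bool} {vstar ε : ℝ}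
    (hα : 1 < α) (hw : ∀ i, 0 < w i) (hlen : ∀ j, 0 < len j) (hv : 0 < vstar) (hε : 0 < ε)
    {τ0 : Fin n → Fin L → ℝ} (hτK : InK m len Alive τ0)
    (hτsum : ∀ i, TTf Alive τ0 i = w i / vstar)
    {ts : Fin n → Fin L → ℝ} (htsK : ts ∈ Kset m len Alive ε)
    (hmin : ∀ t1 ∈ Kset m len Alive ε, Gfun α w Alive ts ≤ Gfun α w Alive t1)
    (hfloor : ∀ i, ε < TTf Alive ts i) :
    ∀ i, w i / vstar ≤ TTf Alive ts i := by
  classical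
  intro i0
  by_contra hcon
  push_neg at hcon
  obtain ⟨⟨h0, hzz, hlenb, hcap⟩, hflr⟩ := htsK
  obtain ⟨hτ0, hτz, hτlen, hτcap⟩ := hτK
  set β := α - 1 with hβdef
  have hβ : 0 < β := by simp [hβdef]; linarith
  have hTpos : ∀ a, 0 < TTf Alive ts a := fun a => lt_trans hε (hfloor a)
  -- C2
  have C2 : ∀ k, Reach τ0 ts i0 k →
      w i0 / TTf Alive ts i0 ≤ w k / TTf Alive ts k := by
    intro k hk
    by_contra hlt
    push_neg at hlt
    have hki0 : k ≠ i0 := by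
      intro h; rw [h] at hlt; exact lt_irrefl _ hlt
    set A := TTf Alive ts i0 with hAdef
    set B := TTf Alive ts k with hBdef
    have hA0 : 0 < A := hTpos i0
    have hB0 : 0 < B := hTpos k
    have hγ : 0 < w i0 * B - w k * A := by
      rw [div_lt_div_iff₀ hB0 hA0] at hlt; linarith
    obtain ⟨δ, C, hδ, hC, H⟩ := augment h0 hzz hlenb hτ0 hτz hτlen hk
    set η := min δ (min (B - ε) ((w i0 * B - w k * A) / (w i0 + w k + 1))) with hηdef
    have hη : 0 < η := lt_min hδ (lt_min (by have := hfloor k; rw [← hBdef] at this; linarith)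
      (div_pos hγ (by have := hw i0; have := hw k; linarith)))
    have hηB : η ≤ B - ε := le_trans (min_le_right _ _) (min_le_left _ _)
    have hηγ : η * (w i0 + w k) < w i0 * B - w k * A := by
      have h1 : η ≤ (w i0 * B - w k * A) / (w i0 + w k + 1) :=
        le_trans (min_le_right _ _) (min_le_right _ _)
      have hwsum : (0:ℝ) < w i0 + w k + 1 := by have := hw i0; have := hw k; linarith
      rw [le_div_iff₀ hwsum] at h1
      nlinarith [hη, hw i0, hw k]
    obtain ⟨t', ht'0, ht'z, ht'len, ht'sums, ht'TT, ht'dev⟩ := H η hη (min_le_left _ _)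
    have hTT' : ∀ a, TTf Alive t' a
        = TTf Alive ts a + (if a = i0 then η else 0) - (if a = k then η else 0) := by
      intro a; simp only [TTf]; exact ht'TT a
    have hKt' : t' ∈ Kset m len Alive ε := by
      refine ⟨⟨ht'0, ht'z, ht'len, fun j => ?_⟩, fun a => ?_⟩
      · rw [ht'sums j]; exact hcap j
      · rw [hTT' a]
        by_cases h1 : a = i0 <;> by_cases h2 : a = k
        · rw [h1] at h2; exact absurd h2.symm hki0
        · rw [if_pos h1, if_neg h2]
          have := hflr a; linarith
        · rw [if_neg h1, if_pos h2, h2]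
          rw [← hBdef]; linarith
        · rw [if_neg h1, if_neg h2]
          have := hflr a; linarith
    -- energy strictly decreases
    have hTi0 : TTf Alive t' i0 = A + η := by
      rw [hTT' i0, if_pos rfl, if_neg (Ne.symm hki0), ← hAdef]; ring
    have hTk : TTf Alive t' k = B - η := by
      rw [hTT' k, if_neg hki0, if_pos rfl, ← hBdef]; ring
    have hAη : 0 < A + η := by linarith
    have hBη : 0 < B - η := by linarith
    have key1 : (A + η) ^ (-β) - A ^ (-β) ≤ -(β * η * (A + η) ^ (-β - 1)) := by
      have := tangent_rpow hβ hA0 hAη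
      nlinarith [this]
    have key2 : (B - η) ^ (-β) - B ^ (-β) ≤ β * η * (B - η) ^ (-β - 1) := by
      have := tangent_rpow hβ hB0 hBη
      nlinarith [this]
    have keyc : w k * (w k) ^ β * (B - η) ^ (-β - 1)
        < w i0 * (w i0) ^ β * (A + η) ^ (-β - 1) := by
      have hb1 : (0:ℝ) ≤ w k / (B - η) := le_of_lt (div_pos (hw k) hBη)
      have hb2 : w k / (B - η) < w i0 / (A + η) := by
        rw [div_lt_div_iff₀ hBη hAη]
        nlinarith [hηγ]
      have := Real.rpow_lt_rpow hb1 hb2 (by linarith : (0:ℝ) < β + 1)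
      rw [term_rw2 (hw k) hBη, term_rw2 (hw i0) hAη] at this
      exact this
    -- sum of term differences
    have hdterm : ∀ a : Fin n, a ≠ i0 → a ≠ k →
        w a * (w a / TTf Alive t' a) ^ β = w a * (w a / TTf Alive ts a) ^ β := by
      intro a h1 h2
      rw [hTT' a, if_neg h1, if_neg h2]; ring_nf
    have hGdiff : Gfun α w Alive t' - Gfun α w Alive ts
        = (w i0 * (w i0 / TTf Alive t' i0) ^ β - w i0 * (w i0 / TTf Alive ts i0) ^ β)
          + (w k * (w k / TTf Alive t' k) ^ β - w k * (w k / TTf Alive ts k) ^ β) := by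
      simp only [Gfun, ← hβdef]
      rw [← Finset.sum_sub_distrib]
      have : ∀ a : Fin n,
          (w a * (w a / TTf Alive t' a) ^ β - w a * (w a / TTf Alive ts a) ^ β)
          = (if a = i0 then (w i0 * (w i0 / TTf Alive t' i0) ^ β
              - w i0 * (w i0 / TTf Alive ts i0) ^ β) else 0)
            + (if a = k then (w k * (w k / TTf Alive t' k) ^ β
              - w k * (w k / TTf Alive ts k) ^ β) else 0) := by
        intro a
        by_cases h1 : a = i0 <;> by_cases h2 : a = k
        · rw [h1] at h2; exact absurd h2.symm hki0
        · rw [if_pos h1, if_neg h2, h1]; ring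
        · rw [if_neg h1, if_pos h2, h2]; ring
        · rw [if_neg h1, if_neg h2, hdterm a h1 h2]; ring
      rw [Finset.sum_congr rfl (fun a _ => this a), Finset.sum_add_distrib,
        Finset.sum_ite_eq' _ i0, Finset.sum_ite_eq' _ k]
      simp
    have hd1 : w i0 * (w i0 / TTf Alive t' i0) ^ β - w i0 * (w i0 / TTf Alive ts i0) ^ β
        = w i0 * (w i0) ^ β * ((A + η) ^ (-β) - A ^ (-β)) := by
      rw [hTi0, ← hAdef, term_rw (hw i0) hAη, term_rw (hw i0) hA0]; ring
    have hd2 : w k * (w k / TTf Alive t' k) ^ β - w k * (w k / TTf Alive ts k) ^ β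
        = w k * (w k) ^ β * ((B - η) ^ (-β) - B ^ (-β)) := by
      rw [hTk, ← hBdef, term_rw (hw k) hBη, term_rw (hw k) hB0]; ring
    have hWi0 : 0 < w i0 * (w i0) ^ β :=
      mul_pos (hw i0) (Real.rpow_pos_of_pos (hw i0) β)
    have hWk : 0 < w k * (w k) ^ β :=
      mul_pos (hw k) (Real.rpow_pos_of_pos (hw k) β)
    have hneg : Gfun α w Alive t' - Gfun α w Alive ts < 0 := by
      rw [hGdiff, hd1, hd2]
      have e1 := mul_le_mul_of_nonneg_left key1 hWi0.le
      have e2 := mul_le_mul_of_nonneg_left key2 hWk.le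
      have e3 := mul_lt_mul_of_pos_left keyc (mul_pos hβ hη)
      linarith
    have := hmin t' hKt'
    linarith
  -- C1
  have C1 : ∀ j : Fin L, (∃ i', Reach τ0 ts i0 i' ∧ ts i' j < τ0 i' j) →
      ∑ a ∈ univ.filter (fun a => Alive a j), ts a j
        = ((min m (univ.filter (fun a => Alive a j)).card : ℕ) : ℝ) * len j := by
    rintro j ⟨i', hri', hltij⟩
    by_contra hne'
    have hslack : ∑ a ∈ univ.filter (fun a => Alive a j), ts a j
        < ((min m (univ.filter (fun a => Alive a j)).card : ℕ) : ℝ) * len j :=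
      lt_of_le_of_ne (hcap j) hne'
    have hAi'j : Alive i' j := by
      by_contra hA; have := hτz i' j hA; have := h0 i' j; linarith
    obtain ⟨δ, C, hδ, hC, H⟩ := augment h0 hzz hlenb hτ0 hτz hτlen hri'
    have hCp : (0:ℝ) < C + 1 := by linarith
    set slack := ((min m (univ.filter (fun a => Alive a j)).card : ℕ) : ℝ) * len j
      - ∑ a ∈ univ.filter (fun a => Alive a j), ts a j with hslackdef
    have hslack0 : 0 < slack := by rw [hslackdef]; linarith
    set η := min δ (min slack ((τ0 i' j - ts i' j) / (C + 1))) with hηdef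
    have hη : 0 < η := lt_min hδ (lt_min hslack0 (div_pos (by linarith) hCp))
    have hηs : η ≤ slack := le_trans (min_le_right _ _) (min_le_left _ _)
    have hηup : η * (C + 1) ≤ τ0 i' j - ts i' j := by
      have h1 : η ≤ (τ0 i' j - ts i' j) / (C + 1) :=
        le_trans (min_le_right _ _) (min_le_right _ _)
      rw [le_div_iff₀ hCp] at h1; linarith
    obtain ⟨t', ht'0, ht'z, ht'len, ht'sums, ht'TT, ht'dev⟩ := H η hη (min_le_left _ _)
    have hTT' : ∀ a, TTf Alive t' a
        = TTf Alive ts a + (if a = i0 then η else 0) - (if a = i' then η else 0) := by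
      intro a; simp only [TTf]; exact ht'TT a
    set t3 : Fin n → Fin L → ℝ :=
      fun a b => t' a b + (if b = j then (if a = i' then η else 0) else 0) with ht3def
    have hTT3 : ∀ a, TTf Alive t3 a = TTf Alive ts a + (if a = i0 then η else 0) := by
      intro a
      simp only [TTf, ht3def]
      rw [Finset.sum_add_distrib, Finset.sum_ite_eq' _ j (fun _ => if a = i' then η else 0)]
      have := ht'TT a
      rw [this]
      by_cases hai : a = i'
      · have hmem : j ∈ univ.filter (fun b => Alive a b) := by
          rw [hai]; exact mem_filter.mpr ⟨mem_univ _, hAi'j⟩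
        rw [if_pos hmem, if_pos hai]
        ring
      · rw [if_neg hai]
        rcases Classical.em (j ∈ univ.filter (fun b => Alive a b)) with hj | hj
        · rw [if_pos hj]; ring
        · rw [if_neg hj]; ring
    have hKt3 : t3 ∈ Kset m len Alive ε := by
      refine ⟨⟨?_, ?_, ?_, ?_⟩, ?_⟩
      · intro a b
        simp only [ht3def]
        have := ht'0 a b
        by_cases hb : b = j
        · rw [if_pos hb]
          by_cases hai : a = i'
          · rw [if_pos hai]; linarith
          · rw [if_neg hai]; linarith
        · rw [if_neg hb]; linarith
      · intro a b hA
        simp only [ht3def]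
        have h1 : ¬ a = i' ∨ ¬ b = j := by
          by_contra hcc
          push_neg at hcc
          exact hA (hcc.1 ▸ hcc.2 ▸ hAi'j)
        rcases h1 with h1 | h1
        · by_cases hb : b = j
          · rw [if_pos hb, if_neg h1, ht'z a b hA]; ring
          · rw [if_neg hb, ht'z a b hA]; ring
        · rw [if_neg h1, ht'z a b hA]; ring
      · intro a b
        simp only [ht3def]
        by_cases hb : b = j
        · subst hb
          by_cases hai : a = i'
          · rw [if_pos rfl, if_pos hai, hai]
            have hd := (abs_le.1 (ht'dev i' b)).2
            have := hτlen i' b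
            nlinarith
          · rw [if_pos rfl, if_neg hai]
            have := ht'len a b; linarith
        · rw [if_neg hb]
          have := ht'len a b; linarith
      · intro b
        simp only [ht3def]
        rw [Finset.sum_add_distrib]
        by_cases hb : b = j
        · subst hb
          have e1 : (∑ a ∈ univ.filter (fun a => Alive a b),
              (if b = b then (if a = i' then η else 0) else 0))
              = ∑ a ∈ univ.filter (fun a => Alive a b), (if a = i' then η else 0) :=
            Finset.sum_congr rfl (fun a _ => by rw [if_pos rfl])
          have hmem : i' ∈ univ.filter (fun a => Alive a b) :=
            mem_filter.mpr ⟨mem_univ _, hAi'j⟩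
          rw [e1, Finset.sum_ite_eq' _ i' (fun _ => η), if_pos hmem, ht'sums b]
          rw [hslackdef] at hηs
          linarith
        · have e1 : (∑ a ∈ univ.filter (fun a => Alive a b),
              (if b = j then (if a = i' then η else 0) else 0)) = 0 :=
            Finset.sum_eq_zero (fun a _ => by rw [if_neg hb])
          rw [e1, ht'sums b, add_zero]
          exact hcap b
      · intro a
        rw [hTT3 a]
        by_cases h1 : a = i0
        · rw [if_pos h1]; have := hflr a; linarith
        · rw [if_neg h1]; have := hflr a; linarith
    -- energy strictly decreases
    have hA0 : 0 < TTf Alive ts i0 := hTpos i0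
    have hTi03 : TTf Alive t3 i0 = TTf Alive ts i0 + η := by
      rw [hTT3 i0, if_pos rfl]
    have hterm : w i0 * (w i0 / TTf Alive t3 i0) ^ β
        < w i0 * (w i0 / TTf Alive ts i0) ^ β := by
      apply mul_lt_mul_of_pos_left _ (hw i0)
      apply Real.rpow_lt_rpow (le_of_lt (div_pos (hw i0) (by rw [hTi03]; linarith)))
        _ hβ
      rw [hTi03]
      exact div_lt_div_of_pos_left (hw i0) hA0 (by linarith)
    have hGd : Gfun α w Alive t3 - Gfun α w Alive ts
        = w i0 * (w i0 / TTf Alive t3 i0) ^ β - w i0 * (w i0 / TTf Alive ts i0) ^ β := by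
      simp only [Gfun, ← hβdef]
      rw [← Finset.sum_sub_distrib]
      have hptw : ∀ a : Fin n,
          (w a * (w a / TTf Alive t3 a) ^ β - w a * (w a / TTf Alive ts a) ^ β)
          = (if a = i0 then (w i0 * (w i0 / TTf Alive t3 i0) ^ β
              - w i0 * (w i0 / TTf Alive ts i0) ^ β) else 0) := by
        intro a
        by_cases h1 : a = i0
        · rw [if_pos h1, h1]
        · rw [if_neg h1, hTT3 a, if_neg h1, add_zero]; ring
      rw [Finset.sum_congr rfl (fun a _ => hptw a), Finset.sum_ite_eq' _ i0]
      simp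
    have hm2 := hmin t3 hKt3
    have hlt0 : Gfun α w Alive t3 - Gfun α w Alive ts < 0 := by rw [hGd]; linarith
    linarith
  -- counting
  set R := univ.filter (fun k => Reach τ0 ts i0 k) with hRdef
  have hi0R : i0 ∈ R := mem_filter.mpr ⟨mem_univ _, Reach.base⟩
  have hSpos : 0 < ∑ k ∈ R, (w k / vstar - TTf Alive ts k) := by
    apply Finset.sum_pos _ ⟨i0, hi0R⟩
    intro k hk
    have hrk := (mem_filter.mp hk).2
    have h1 := C2 k hrk
    have hconv : TTf Alive ts i0 * vstar < w i0 := by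
      rw [lt_div_iff₀ hv] at hcon; exact hcon
    have h2 : vstar < w i0 / TTf Alive ts i0 := by
      rw [lt_div_iff₀ (hTpos i0)]; linarith
    have h3 : vstar < w k / TTf Alive ts k := lt_of_lt_of_le h2 h1
    rw [lt_div_iff₀ (hTpos k)] at h3
    rw [sub_pos, lt_div_iff₀ hv]
    linarith
  have hSle : ∑ k ∈ R, (w k / vstar - TTf Alive ts k) ≤ 0 := by
    have hrw : ∀ k, w k / vstar - TTf Alive ts k = ∑ j, (τ0 k j - ts k j) := by
      intro k
      rw [← hτsum k]
      simp only [TTf]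
      rw [← Finset.sum_sub_distrib]
      exact sum_filter_eq_sum_univ (fun j hA => by rw [hτz k j hA, hzz k j hA]; ring)
    rw [Finset.sum_congr rfl (fun k _ => hrw k), Finset.sum_comm]
    apply Finset.sum_nonpos
    intro j _
    by_cases hQ : ∃ i', Reach τ0 ts i0 i' ∧ ts i' j < τ0 i' j
    · have htight := C1 j hQ
      obtain ⟨i', hri', hlti'⟩ := hQ
      have e1 : ∑ k ∈ univ.filter (fun a => Alive a j), τ0 k j = ∑ k, τ0 k j :=
        sum_filter_eq_sum_univ (fun k hA => hτz k j hA)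
      have e2 : ∑ k ∈ univ.filter (fun a => Alive a j), ts k j = ∑ k, ts k j :=
        sum_filter_eq_sum_univ (fun k hA => hzz k j hA)
      have h1 : ∑ k, τ0 k j ≤ ∑ k, ts k j := by
        have a1 := hτcap j
        rw [e1] at a1
        rw [← e2, htight]
        exact a1
      have h2 : 0 ≤ ∑ k ∈ univ.filter (fun k => ¬ Reach τ0 ts i0 k), (τ0 k j - ts k j) := by
        apply Finset.sum_nonneg
        intro k hk
        have hnr := (mem_filter.mp hk).2
        by_contra hneg'
        push_neg at hneg'
        exact hnr (Reach.step hri' hlti' (by linarith))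
      have h3 := Finset.sum_filter_add_sum_filter_not univ
        (fun k => Reach τ0 ts i0 k) (fun k => τ0 k j - ts k j)
      have h4 : ∑ k, (τ0 k j - ts k j) ≤ 0 := by
        rw [Finset.sum_sub_distrib]; linarith
      rw [hRdef]
      linarith
    · push_neg at hQ
      apply Finset.sum_nonpos
      intro k hk
      have := hQ k (mem_filter.mp hk).2
      linarith
  linarith

/-- (Key invariant behind Theorem 1: first iteration of BAL.) View the
energy-minimization instance as a WAP instance with `m` processors in every
interval. Let `vstar` be the minimum speed `v > 0` for which the WAP instance
`⟨J, I, v⟩` is feasible. Then there is an optimal feasible solution of the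
energy-minimization problem in which every job critical for `⟨J, I, vstar⟩` has
speed exactly `vstar` and every non-critical job has speed at most `vstar`. -/
theorem bal_first_iteration_invariant {n L : ℕ} (m : ℕ) (α : ℝ)
    (w : Fin n → ℝ) (len : Fin L → ℝ) (Alive : Fin n → Fin L → Bool) (vstar : ℝ)
    (hm : 1 ≤ m) (hα : 1 < α) (hw : ∀ i, 0 < w i) (hlen : ∀ j, 0 < len j)
    (hv : 0 < vstar)
    (hfeas : WFeasible w len (fun _ => m) Alive vstar)
    (hmin : ∀ v : ℝ, 0 < v → WFeasible w len (fun _ => m) Alive v → vstar ≤ v) :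
    ∃ (s : Fin n → ℝ) (t : Fin n → Fin L → ℝ),
      EFeasible m w len Alive s t ∧
      (∀ s' t', EFeasible m w len Alive s' t' → Energy α w s ≤ Energy α w s') ∧
      (∀ i, CriticalJob w len (fun _ => m) Alive vstar i → s i = vstar) ∧
      (∀ i, ¬ CriticalJob w len (fun _ => m) Alive vstar i → s i ≤ vstar) := by
  classical
  rcases Nat.eq_zero_or_pos n with hn | hn
  · subst hn
    refine ⟨fun _ => vstar, fun _ _ => 0,
      ⟨fun i => i.elim0, fun i => i.elim0, fun i => i.elim0, fun i => i.elim0,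
        fun j => ?_, fun i => i.elim0⟩,
      fun s' t' _ => ?_, fun i => i.elim0, fun i => i.elim0⟩
    · have h1 : (univ : Finset (Fin 0)) = ∅ := rfl
      simp
    · simp [Energy]
  -- n ≥ 1
  haveI : Nonempty (Fin n) := ⟨⟨0, hn⟩⟩
  obtain ⟨τ0, hτ0n, hτ0z, hτ0len, hτ0cap, hτ0sum⟩ := hfeas
  have hβ : 0 < α - 1 := by linarith
  have hτsum : ∀ i, TTf Alive τ0 i = w i / vstar := hτ0sum
  -- τ0 satisfies the stronger (min) capacity constraint as well
  have hInKτ0 : InK m len Alive τ0 := by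
    refine ⟨hτ0n, hτ0z, hτ0len, fun j => ?_⟩
    have hcard : ∑ i ∈ univ.filter (fun i => Alive i j), τ0 i j
        ≤ ((univ.filter (fun i => Alive i j)).card : ℝ) * len j := by
      have := Finset.sum_le_card_nsmul (univ.filter (fun i => Alive i j))
        (fun i => τ0 i j) (len j) (fun i _ => hτ0len i j)
      rwa [nsmul_eq_mul] at this
    have hmcap : ∑ i ∈ univ.filter (fun i => Alive i j), τ0 i j ≤ (m : ℝ) * len j :=
      hτ0cap j
    rw [Nat.cast_min]
    rcases min_cases ((m:ℝ)) (((univ.filter (fun i => Alive i j)).card : ℕ) : ℝ) with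
      ⟨he, _⟩ | ⟨he, _⟩ <;> rw [he]
    · exact hmcap
    · exact hcard
  -- energy of the all-vstar solution
  set E0 : ℝ := ∑ i, w i * vstar ^ (α - 1) with hE0def
  have hE0 : 0 ≤ E0 := Finset.sum_nonneg fun i _ =>
    mul_nonneg (hw i).le (Real.rpow_nonneg hv.le _)
  set εf : Fin n → ℝ := fun i => w i / ((E0 + 1) / w i) ^ (1 / (α - 1)) with hεfdef
  have hbase : ∀ i, (0:ℝ) < (E0 + 1) / w i := fun i => div_pos (by linarith) (hw i)
  have hεf : ∀ i, 0 < εf i := fun i =>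
    div_pos (hw i) (Real.rpow_pos_of_pos (hbase i) _)
  have hεfkey : ∀ i, w i * (w i / εf i) ^ (α - 1) = E0 + 1 := by
    intro i
    have h1 : w i / εf i = ((E0 + 1) / w i) ^ (1 / (α - 1)) := by
      rw [hεfdef]
      rw [div_div_eq_mul_div, mul_comm, mul_div_assoc, div_self (hw i).ne', mul_one]
    rw [h1, ← Real.rpow_mul (hbase i).le, one_div_mul_cancel (by linarith : α - 1 ≠ 0),
      Real.rpow_one, mul_comm, div_mul_cancel₀ _ (hw i).ne']
  set ε : ℝ := univ.inf' univ_nonempty (fun i => min (w i / vstar) (εf i)) with hεdef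
  have hεle1 : ∀ i, ε ≤ w i / vstar := fun i =>
    le_trans (Finset.inf'_le _ (mem_univ i)) (min_le_left _ _)
  have hεle2 : ∀ i, ε ≤ εf i := fun i =>
    le_trans (Finset.inf'_le _ (mem_univ i)) (min_le_right _ _)
  have hεpos : 0 < ε := by
    rw [hεdef, Finset.lt_inf'_iff]
    exact fun i _ => lt_min (div_pos (hw i) hv) (hεf i)
  have hKτ0 : τ0 ∈ Kset m len Alive ε := by
    refine ⟨hInKτ0, fun i => ?_⟩
    rw [hτsum i]; exact hεle1 i
  obtain ⟨ts, htsK, hmin'⟩ := exists_min (α := α) hεpos hw ⟨τ0, hKτ0⟩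
  have hGτ0 : Gfun α w Alive τ0 = E0 := by
    rw [hE0def]
    apply Finset.sum_congr rfl
    intro i _
    rw [hτsum i]
    congr 1
    rw [div_div_eq_mul_div, mul_comm, mul_div_assoc, div_self (hw i).ne', mul_one]
  have hGle : Gfun α w Alive ts ≤ E0 := by
    rw [← hGτ0]; exact hmin' τ0 hKτ0
  have hTpos : ∀ i, 0 < TTf Alive ts i := fun i => lt_of_lt_of_le hεpos (htsK.2 i)
  have hGsingle : ∀ i, w i * (w i / TTf Alive ts i) ^ (α - 1) ≤ Gfun α w Alive ts := by
    intro i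
    exact Finset.single_le_sum (f := fun a => w a * (w a / TTf Alive ts a) ^ (α - 1))
      (fun a _ => mul_nonneg (hw a).le (Real.rpow_nonneg
        (div_nonneg (hw a).le (hTpos a).le) _)) (mem_univ i)
  have hfloor : ∀ i, ε < TTf Alive ts i := by
    intro i
    rcases lt_or_ge (εf i) (TTf Alive ts i) with h | h
    · exact lt_of_le_of_lt (hεle2 i) h
    · exfalso
      have h1 : w i / εf i ≤ w i / TTf Alive ts i :=
        div_le_div_of_nonneg_left (hw i).le (hTpos i) h
      have h2 : (w i / εf i) ^ (α - 1) ≤ (w i / TTf Alive ts i) ^ (α - 1) :=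
        Real.rpow_le_rpow (div_nonneg (hw i).le (hεf i).le) h1 hβ.le
      have h3 := mul_le_mul_of_nonneg_left h2 (hw i).le
      rw [hεfkey i] at h3
      have h4 := hGsingle i
      linarith
  have hGoalA : ∀ i, w i / vstar ≤ TTf Alive ts i :=
    goalA hα hw hlen hv hεpos hInKτ0 hτsum htsK hmin' hfloor
  obtain ⟨⟨hts0, htsz, htslen, htscap⟩, htsflr⟩ := htsK
  set s : Fin n → ℝ := fun i => w i / TTf Alive ts i with hsdef
  have hspos : ∀ i, 0 < s i := fun i => div_pos (hw i) (hTpos i)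
  have hws : ∀ i, w i / s i = TTf Alive ts i := by
    intro i
    rw [hsdef]
    rw [div_div_eq_mul_div, mul_comm, mul_div_assoc, div_self (hw i).ne', mul_one]
  have hsle : ∀ i, s i ≤ vstar := by
    intro i
    have h1 : w i / TTf Alive ts i ≤ w i / (w i / vstar) :=
      div_le_div_of_nonneg_left (hw i).le (div_pos (hw i) hv) (hGoalA i)
    have h2 : w i / (w i / vstar) = vstar := by
      rw [div_div_eq_mul_div, mul_comm, mul_div_assoc, div_self (hw i).ne', mul_one]
    rw [hsdef]; rw [h2] at h1; exact h1
  have hEFs : EFeasible m w len Alive s ts := by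
    refine ⟨hspos, hts0, htsz, fun i => ?_, htscap, htslen⟩
    rw [hws i]
    exact le_rfl
  have hEnG : Energy α w s = Gfun α w Alive ts := by
    simp only [Energy, Gfun, hsdef]
  refine ⟨s, ts, hEFs, ?_, ?_, fun i _ => hsle i⟩
  · -- optimality
    rintro s' t' ⟨hs'pos, ht'0, ht'z, ht'ge, ht'cap, ht'len⟩
    have hT'pos : ∀ i, 0 < TTf Alive t' i := fun i =>
      lt_of_lt_of_le (div_pos (hw i) (hs'pos i)) (ht'ge i)
    have hs'ge : ∀ i, w i / TTf Alive t' i ≤ s' i := by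
      intro i
      rw [div_le_iff₀ (hT'pos i)]
      have := ht'ge i
      rw [div_le_iff₀ (hs'pos i)] at this
      calc w i ≤ (TTf Alive t' i) * s' i := this
        _ = s' i * TTf Alive t' i := mul_comm _ _
    have hterm : ∀ i, w i * (w i / TTf Alive t' i) ^ (α - 1) ≤ w i * s' i ^ (α - 1) := by
      intro i
      apply mul_le_mul_of_nonneg_left _ (hw i).le
      exact Real.rpow_le_rpow (div_nonneg (hw i).le (hT'pos i).le) (hs'ge i) hβ.le
    have hGE : Gfun α w Alive t' ≤ Energy α w s' := by
      simp only [Gfun, Energy]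
      exact Finset.sum_le_sum fun i _ => hterm i
    by_cases hcase : ∀ i, ε ≤ TTf Alive t' i
    · have hK : t' ∈ Kset m len Alive ε := ⟨⟨ht'0, ht'z, ht'len, ht'cap⟩, hcase⟩
      rw [hEnG]
      exact le_trans (hmin' t' hK) hGE
    · push_neg at hcase
      obtain ⟨i, hi⟩ := hcase
      have h1 : w i / εf i < w i / TTf Alive t' i :=
        div_lt_div_of_pos_left (hw i) (hT'pos i) (lt_of_lt_of_le hi (hεle2 i))
      have h2 : (w i / εf i) ^ (α - 1) < (w i / TTf Alive t' i) ^ (α - 1) :=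
        Real.rpow_lt_rpow (div_nonneg (hw i).le (hεf i).le) h1 hβ
      have h3 := mul_lt_mul_of_pos_left h2 (hw i)
      rw [hεfkey i] at h3
      have h4 : w i * (w i / TTf Alive t' i) ^ (α - 1) ≤ Gfun α w Alive t' :=
        Finset.single_le_sum (f := fun a => w a * (w a / TTf Alive t' a) ^ (α - 1))
          (fun a _ => mul_nonneg (hw a).le (Real.rpow_nonneg
            (div_nonneg (hw a).le (hT'pos a).le) _)) (mem_univ i)
      rw [hEnG]
      linarith
  · -- critical jobs have speed vstar
    intro i hcrit
    set c : Fin n → ℝ := fun k => (w k / vstar) / TTf Alive ts k with hcdef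
    have hc0 : ∀ k, 0 < c k := fun k => div_pos (div_pos (hw k) hv) (hTpos k)
    have hcle : ∀ k, c k ≤ 1 := fun k => (div_le_one (hTpos k)).mpr (hGoalA k)
    set τ : Fin n → Fin L → ℝ := fun k j => ts k j * c k with hτdef
    have hτle : ∀ k j, τ k j ≤ ts k j := fun k j =>
      mul_le_of_le_one_right (hts0 k j) (hcle k)
    have hτfeas : WFeasAssign w len (fun _ => m) Alive vstar τ := by
      refine ⟨fun k j => mul_nonneg (hts0 k j) (hc0 k).le,
        fun k j hA => by rw [hτdef]; dsimp only; rw [htsz k j hA, zero_mul],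
        fun k j => le_trans (hτle k j) (htslen k j), fun j => ?_, fun k => ?_⟩
      · have h1 : ∑ k ∈ univ.filter (fun k => Alive k j), τ k j
            ≤ ∑ k ∈ univ.filter (fun k => Alive k j), ts k j :=
          Finset.sum_le_sum fun k _ => hτle k j
        have h2 := htscap j
        have h3 : ((min m (univ.filter (fun k => Alive k j)).card : ℕ) : ℝ) ≤ (m : ℝ) :=
          Nat.cast_le.mpr (min_le_left _ _)
        have h4 : ((min m (univ.filter (fun k => Alive k j)).card : ℕ) : ℝ) * len j
            ≤ (m : ℝ) * len j := mul_le_mul_of_nonneg_right h3 (hlen j).le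
        linarith
      · rw [hτdef]
        dsimp only
        rw [← Finset.sum_mul]
        have : (∑ j ∈ univ.filter (fun j => Alive k j), ts k j) = TTf Alive ts k := rfl
        rw [this, hcdef]
        dsimp only
        rw [mul_comm, div_mul_cancel₀ _ (hTpos k).ne']
    have hdich := hcrit τ hτfeas
    have hTTle : TTf Alive ts i ≤ w i / vstar := by
      by_contra hgt
      push_neg at hgt
      have hci1 : c i < 1 := (div_lt_one (hTpos i)).mpr hgt
      have hzero : ∀ j, Alive i j → ts i j = 0 := by
        intro j hAij
        rcases hdich j hAij with hcase | hcase
        · exfalso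
          have h1 : ts i j * c i ≤ len j * c i :=
            mul_le_mul_of_nonneg_right (htslen i j) (hc0 i).le
          have h2 : len j * c i < len j * 1 := by
            apply mul_lt_mul_of_pos_left hci1 (hlen j)
          have h3 : τ i j = ts i j * c i := rfl
          rw [h3] at hcase
          rw [mul_one] at h2
          linarith [hcase ▸ (le_trans h1 h2.le), hcase]
        · have hb1 : ∑ k ∈ univ.filter (fun k => Alive k j), τ k j
              ≤ ∑ k ∈ univ.filter (fun k => Alive k j), ts k j :=
            Finset.sum_le_sum fun k _ => hτle k j
          have hb2 := htscap j
          have h3 : ((min m (univ.filter (fun k => Alive k j)).card : ℕ) : ℝ) ≤ (m : ℝ) :=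
            Nat.cast_le.mpr (min_le_left _ _)
          have hb3 : ((min m (univ.filter (fun k => Alive k j)).card : ℕ) : ℝ) * len j
              ≤ (m : ℝ) * len j := mul_le_mul_of_nonneg_right h3 (hlen j).le
          have hsum0 : ∑ k ∈ univ.filter (fun k => Alive k j), (ts k j - τ k j) = 0 := by
            rw [Finset.sum_sub_distrib]
            rw [hcase] at *
            linarith
          have heach := (Finset.sum_eq_zero_iff_of_nonneg
            (fun k _ => sub_nonneg.mpr (hτle k j))).mp hsum0 i
            (mem_filter.mpr ⟨mem_univ _, hAij⟩)
          have h5 : ts i j = ts i j * c i := by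
            have h6 : τ i j = ts i j * c i := rfl
            rw [h6] at heach
            linarith
          by_contra hne0
          have hpos : 0 < ts i j := lt_of_le_of_ne (hts0 i j) (Ne.symm hne0)
          have : ts i j * c i < ts i j * 1 := mul_lt_mul_of_pos_left hci1 hpos
          rw [mul_one] at this
          linarith
      have hTT0 : TTf Alive ts i = 0 := by
        apply Finset.sum_eq_zero
        intro j hj
        exact hzero j (mem_filter.mp hj).2
      have := hTpos i
      rw [hTT0] at this
      exact lt_irrefl _ this
    have hTTeq : TTf Alive ts i = w i / vstar := le_antisymm hTTle (hGoalA i)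
    rw [hsdef]
    dsimp only
    rw [hTTeq, div_div_eq_mul_div, mul_comm, mul_div_assoc, div_self (hw i).ne', mul_one]
end

section
/- (Upper bound used by BAL's binary search.) Let <J,I,v> be a WAP instance in which every job is alive in at least one interval. If v ≥ (Σ_{i∈A(j)} w_i)/|I_j| for every interval j, then the instance <J,I,v> is feasible; in particular, <J,I,v> is feasible for v = max{ max_j (Σ_{i∈A(j)} w_i)/|I_j| , max_i den_i }, where den_i = w_i / Σ_{j:i∈A(j)} |I_j|. -/
open Finset

/-- (Upper bound used by BAL's binary search.) In a WAP instance in which every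
job is alive in at least one interval: if `v > 0` satisfies
`v ≥ (∑_{i ∈ A j} w i) / |I j|` for every interval `j`, then `⟨J, I, v⟩` is
feasible; in particular, `⟨J, I, v⟩` is feasible for
`v = max (max_j (∑_{i ∈ A j} w i) / |I j|) (max_i den i)`, where
`den i = w i / ∑_{j : i ∈ A j} |I j|`. -/
theorem wap_feasible_upper_bound {n L : ℕ} (w : Fin n → ℝ) (len : Fin L → ℝ)
    (mj : Fin L → ℕ) (Alive : Fin n → Fin L → Bool)
    (hw : ∀ i, 0 < w i) (hlen : ∀ j, 0 < len j) (hmj : ∀ j, 1 ≤ mj j)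
    (hn : 0 < n) (hL : 0 < L)
    (halive : ∀ i, ∃ j, Alive i j) :
    (∀ v : ℝ, 0 < v →
      (∀ j, (∑ i ∈ univ.filter (fun i => Alive i j), w i) / len j ≤ v) →
      WFeasible w len mj Alive v) ∧
    WFeasible w len mj Alive
      (max
        ((univ : Finset (Fin L)).sup' ⟨⟨0, hL⟩, mem_univ _⟩
          (fun j => (∑ i ∈ univ.filter (fun i => Alive i j), w i) / len j))
        ((univ : Finset (Fin n)).sup' ⟨⟨0, hn⟩, mem_univ _⟩
          (fun i => w i / ∑ j ∈ univ.filter (fun j => Alive i j), len j))) := by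
  set S : Fin n → ℝ := fun i => ∑ j ∈ univ.filter (fun j => Alive i j), len j with hSdef
  have hSpos : ∀ i, 0 < S i := by
    intro i
    obtain ⟨j, hj'⟩ := halive i
    apply Finset.sum_pos (fun j _ => hlen j)
    exact ⟨j, by simp [hj']⟩
  have hlenleS : ∀ i j, Alive i j → len j ≤ S i := by
    intro i j hij
    apply Finset.single_le_sum (f := len) (fun j _ => (hlen j).le)
    simp [hij]
  have key : ∀ v : ℝ, 0 < v →
      (∀ j, (∑ i ∈ univ.filter (fun i => Alive i j), w i) / len j ≤ v) →
      WFeasible w len mj Alive v := by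
    intro v hv hvj
    have hwv : ∀ i, w i / v ≤ S i := by
      intro i
      obtain ⟨j, hij⟩ := halive i
      have h1 : w i ≤ ∑ k ∈ univ.filter (fun k => Alive k j), w k :=
        Finset.single_le_sum (fun k _ => (hw k).le) (by simp [hij])
      have h2 : (∑ k ∈ univ.filter (fun k => Alive k j), w k) ≤ v * len j := by
        have := hvj j
        rw [div_le_iff₀ (hlen j)] at this
        linarith
      have h3 : len j ≤ S i := hlenleS i j hij
      rw [div_le_iff₀ hv]
      calc w i ≤ v * len j := h1.trans h2
        _ ≤ S i * v := by nlinarith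
    refine ⟨fun i j => if Alive i j then (w i / v) * (len j / S i) else 0, ?_, ?_, ?_, ?_, ?_⟩
    · intro i j
      dsimp only
      split
      · exact mul_nonneg (div_nonneg (hw i).le hv.le) (div_nonneg (hlen j).le (hSpos i).le)
      · exact le_refl 0
    · intro i j hij
      simp [hij]
    · intro i j
      dsimp only
      split
      · rename_i hij
        have := hwv i
        have hS := hSpos i
        have hlj := hlen j
        calc w i / v * (len j / S i) ≤ S i * (len j / S i) := by
              apply mul_le_mul_of_nonneg_right this (by positivity)
          _ = len j := by field_simp
      · exact (hlen j).le
    · intro j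
      have hterm : ∀ i ∈ univ.filter (fun i => Alive i j),
          (if Alive i j then (w i / v) * (len j / S i) else 0) ≤ w i / v := by
        intro i hi
        simp only [mem_filter] at hi
        rw [if_pos hi.2]
        have hS := hSpos i
        have h1 : len j / S i ≤ 1 := by
          rw [div_le_one hS]; exact hlenleS i j hi.2
        have h2 : 0 ≤ w i / v := div_nonneg (hw i).le hv.le
        nlinarith
      have h1 : (∑ i ∈ univ.filter (fun i => Alive i j),
          (if Alive i j then (w i / v) * (len j / S i) else 0))
          ≤ ∑ i ∈ univ.filter (fun i => Alive i j), w i / v :=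
        Finset.sum_le_sum hterm
      have h2 : (∑ i ∈ univ.filter (fun i => Alive i j), w i / v) ≤ len j := by
        rw [← Finset.sum_div, div_le_iff₀ hv]
        have := hvj j
        rw [div_le_iff₀ (hlen j)] at this
        linarith
      have h3 : len j ≤ (mj j : ℝ) * len j := by
        have : (1 : ℝ) ≤ (mj j : ℝ) := by exact_mod_cast hmj j
        nlinarith [hlen j]
      linarith
    · intro i
      dsimp only
      have hS := hSpos i
      have h1 : (∑ j ∈ univ.filter (fun j => Alive i j),
          (if Alive i j then (w i / v) * (len j / S i) else 0))
          = (w i / v / S i) * ∑ j ∈ univ.filter (fun j => Alive i j), len j := by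
        rw [Finset.mul_sum]
        apply Finset.sum_congr rfl
        intro j hj
        simp only [mem_filter] at hj
        rw [if_pos hj.2]
        ring
      rw [h1]
      have h2 : (∑ j ∈ univ.filter (fun j => Alive i j), len j) = S i := rfl
      rw [h2]
      field_simp
  refine ⟨key, ?_⟩
  set i0 : Fin n := ⟨0, hn⟩
  have hB : 0 < w i0 / ∑ j ∈ univ.filter (fun j => Alive i0 j), len j :=
    div_pos (hw i0) (hSpos i0)
  have hBle : (fun i => w i / ∑ j ∈ univ.filter (fun j => Alive i j), len j) i0 ≤
      (univ : Finset (Fin n)).sup' ⟨⟨0, hn⟩, mem_univ _⟩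
      (fun i => w i / ∑ j ∈ univ.filter (fun j => Alive i j), len j) :=
    by exact Finset.le_sup' (fun i => w i / ∑ j ∈ univ.filter (fun j => Alive i j), len j) (mem_univ i0)
  apply key
  · exact lt_of_lt_of_le hB (le_trans hBle (le_max_right _ _))
  · intro j
    exact le_trans (Finset.le_sup' (fun j => (∑ i ∈ univ.filter (fun i => Alive i j), w i) / len j) (mem_univ j)) (le_max_left _ _)
end
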